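/- Let n, m, l be natural numbers with n + m + l even, and set P₁ := n² + m² + l² − 2nm − 2nl − 2ml. Then I_{n,m,l,2} = (n+m−l−3)‼ · (n−m+l−3)‼ · (−n+m+l−3)‼ · ((P₁ − 1)² − 16·n·m·l), where the three double-factorial arguments are odd integers (possibly negative) and ‼ denotes the extended double factorial. -/

import Mathlib

open MeasureTheory Real

open Filter Topology Polynomial

/-- Physicists' Hermite polynomials: `H 0 x = 1`, `H 1 x = 2x`,
`H (n+1) x = 2x * H n x - 2n * H (n-1) x`. -/
noncomputable def hermiteP : ℕ → ℝ → ℝ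
  | 0, _ => 1
  | 1, x => 2 * x
  | n + 2, x => 2 * x * hermiteP (n + 1) x - 2 * ((n : ℝ) + 1) * hermiteP n x

/-- Extended double factorial of an odd integer `a`:
`a‼ = 2^((a+1)/2) * Γ(a/2 + 1) / √π`. -/
noncomputable def ddfact (a : ℤ) : ℝ :=
  (2 : ℝ) ^ ((a + 1) / 2) * Real.Gamma ((a : ℝ) / 2 + 1) / Real.sqrt π

lemma d_step (a : ℤ) (ha : Odd a) : ddfact (a + 2) = ((a : ℝ) + 2) * ddfact a := by
  obtain ⟨k, rfl⟩ := ha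
  have e1 : (2 * k + 1 + 2 + 1) / 2 = k + 2 := by omega
  have e2 : (2 * k + 1 + 1) / 2 = k + 1 := by omega
  have hG : ((2 * k + 1 + 2 : ℤ) : ℝ) / 2 + 1 = (((2 * k + 1 : ℤ) : ℝ) / 2 + 1) + 1 := by
    push_cast; ring
  have hne : ((2 * k + 1 : ℤ) : ℝ) / 2 + 1 ≠ 0 := by
    push_cast
    intro hc
    have : (k : ℝ) = -3/2 := by linarith
    have h2 : ((k : ℝ)) * 2 = -3 := by linarith
    have : ((k * 2 : ℤ) : ℝ) = ((-3 : ℤ) : ℝ) := by push_cast; linarith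
    have : (k * 2 : ℤ) = -3 := by exact_mod_cast this
    omega
  unfold ddfact
  rw [e1, e2, hG, Real.Gamma_add_one hne]
  rw [show (k : ℤ) + 2 = (k + 1) + 1 by ring, zpow_add₀ (two_ne_zero) (k+1) 1]
  push_cast
  field_simp

lemma d_ne_zero (a : ℤ) (ha : Odd a) : ddfact a ≠ 0 := by
  obtain ⟨k, rfl⟩ := ha
  unfold ddfact
  have h1 : (2 : ℝ) ^ ((2 * k + 1 + 1) / 2) ≠ 0 := zpow_ne_zero _ two_ne_zero
  have h2 : Real.Gamma (((2 * k + 1 : ℤ) : ℝ) / 2 + 1) ≠ 0 := by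
    apply Real.Gamma_ne_zero
    intro mm hc
    push_cast at hc
    have : ((2 * k + 3 : ℤ) : ℝ) = ((-2 * (mm : ℤ) : ℤ) : ℝ) := by push_cast; linarith
    have : (2 * k + 3 : ℤ) = -2 * (mm : ℤ) := by exact_mod_cast this
    omega
  have h3 : Real.sqrt π ≠ 0 := by positivity
  positivity
lemma ddfact_neg_one : ddfact (-1) = 1 := by
  unfold ddfact
  norm_num
  rw [Real.Gamma_one_half_eq]
  have h3 : Real.sqrt π ≠ 0 := by positivity
  field_simp

lemma xherm (n : ℕ) (x : ℝ) :
    2 * x * hermiteP n x = hermiteP (n + 1) x + 2 * (n : ℝ) * hermiteP (n - 1) x := by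
  cases n with
  | zero => simp [hermiteP]
  | succ k => simp only [hermiteP, Nat.add_sub_cancel]; push_cast; ring

lemma hermiteP_two (x : ℝ) : hermiteP 2 x = 4 * x ^ 2 - 2 := by
  simp only [hermiteP]; push_cast; ring

lemma h2_mul (l : ℕ) (x : ℝ) :
    hermiteP 2 x * hermiteP l x =
      hermiteP (l + 2) x + 4 * (l : ℝ) * hermiteP l x
        + 4 * (l : ℝ) * ((l : ℝ) - 1) * hermiteP (l - 2) x := by
  rcases l with _ | _ | k
  · simp [hermiteP_two, hermiteP]
  · simp only [hermiteP_two]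
    simp only [show (1:ℕ) + 2 = 3 from rfl, show (1:ℕ) - 2 = 0 from rfl]
    simp [hermiteP]; push_cast; ring
  · have e1 : 2 * x * hermiteP (k + 2) x
        = hermiteP (k + 3) x + 2 * ((k : ℝ) + 2) * hermiteP (k + 1) x := by
      have := xherm (k + 2) x; push_cast at this; convert this using 2 <;> norm_num
    have e2 : 2 * x * hermiteP (k + 3) x
        = hermiteP (k + 4) x + 2 * ((k : ℝ) + 3) * hermiteP (k + 2) x := by
      have := xherm (k + 3) x; push_cast at this; convert this using 2 <;> norm_num
    have e3 : 2 * x * hermiteP (k + 1) x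
        = hermiteP (k + 2) x + 2 * ((k : ℝ) + 1) * hermiteP k x := by
      have := xherm (k + 1) x; push_cast at this; convert this using 2 <;> norm_num
    have h2 := hermiteP_two x
    show hermiteP 2 x * hermiteP (k+2) x = hermiteP (k + 4) x
        + 4 * (((k+2 : ℕ)):ℝ) * hermiteP (k+2) x
        + 4 * (((k+2 : ℕ)):ℝ) * ((((k+2 : ℕ)):ℝ) - 1) * hermiteP k x
    push_cast
    linear_combination hermiteP (k + 2) x * h2 + 2 * x * e1 + e2 + 2 * ((k:ℝ) + 2) * e3

lemma hermiteP_hasDerivAt (n : ℕ) (x : ℝ) :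
    HasDerivAt (fun y => hermiteP n y) (2 * (n : ℝ) * hermiteP (n - 1) x) x := by
  induction n using Nat.strong_induction_on with
  | _ n ih =>
    rcases n with _ | _ | k
    · simp only [hermiteP, Nat.cast_zero]
      simpa using hasDerivAt_const x (1 : ℝ)
    · have h : HasDerivAt (fun y : ℝ => 2 * y) 2 x := by
        simpa using (hasDerivAt_id x).const_mul (2:ℝ)
      have : (fun y => hermiteP 1 y) = fun y : ℝ => 2 * y := by
        funext y; simp [hermiteP]
      rw [this]
      convert h using 1
      simp [hermiteP]
    · have h1 := ih (k + 1) (by omega)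
      have h0 := ih k (by omega)
      have hid : HasDerivAt (fun y : ℝ => 2 * y) 2 x := by
        simpa using (hasDerivAt_id x).const_mul (2:ℝ)
      have H := (hid.mul h1).sub (h0.const_mul (2 * ((k:ℝ) + 1)))
      have hfun : (fun y => hermiteP (k + 2) y)
          = fun y => 2 * y * hermiteP (k + 1) y - 2 * ((k:ℝ) + 1) * hermiteP k y := by
        funext y; simp [hermiteP]
      rw [hfun]
      refine H.congr_deriv (Eq.symm ?_)
      have hx := xherm k x
      show 2 * (((k+2 : ℕ)):ℝ) * hermiteP (k + 1) x = _
      push_cast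
      linear_combination (-2 * ((k:ℝ) + 1)) * hx

lemma herm_poly (n : ℕ) : ∃ p : Polynomial ℝ, ∀ x, hermiteP n x = p.eval x := by
  induction n using Nat.strong_induction_on with
  | _ n ih =>
    rcases n with _ | _ | k
    · exact ⟨1, by simp [hermiteP]⟩
    · exact ⟨Polynomial.C 2 * Polynomial.X, by simp [hermiteP]⟩
    · obtain ⟨p, hp⟩ := ih (k + 1) (by omega)
      obtain ⟨q, hq⟩ := ih k (by omega)
      refine ⟨Polynomial.C 2 * Polynomial.X * p - Polynomial.C (2 * ((k:ℝ) + 1)) * q, fun x => ?_⟩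
      simp [hermiteP, hp, hq]

lemma integrable_poly_gauss (p : Polynomial ℝ) :
    Integrable fun x : ℝ => p.eval x * Real.exp (-2 * x ^ 2) := by
  induction p using Polynomial.induction_on' with
  | add p q hp hq => simpa [add_mul, Pi.add_def] using hp.add hq
  | monomial k c =>
    have h : Integrable fun x : ℝ => x ^ (k : ℝ) * Real.exp (-2 * x ^ 2) := by
      have h2 : (0:ℝ) < 2 := by norm_num
      have hk : (-1 : ℝ) < (k : ℝ) := lt_of_lt_of_le (by norm_num) (Nat.cast_nonneg k)
      simpa using integrable_rpow_mul_exp_neg_mul_sq h2 hk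
    simp_rw [Real.rpow_natCast] at h
    have := h.const_mul c
    simp only [Polynomial.eval_monomial]
    simpa [mul_assoc] using this

lemma tendsto_poly_gauss_top (p : Polynomial ℝ) :
    Tendsto (fun x : ℝ => p.eval x * Real.exp (-2 * x ^ 2)) atTop (𝓝 0) := by
  induction p using Polynomial.induction_on' with
  | add p q hp hq => simpa [add_mul] using hp.add hq
  | monomial k c =>
    have base := tendsto_pow_mul_exp_neg_atTop_nhds_zero k
    have g0 : Tendsto (fun x : ℝ => |c| * (x ^ k * Real.exp (-x))) atTop (𝓝 0) := by
      simpa using base.const_mul |c|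
    apply squeeze_zero_norm' _ g0
    filter_upwards [Filter.eventually_ge_atTop (1:ℝ)] with x hx
    have hx0 : (0:ℝ) ≤ x := by linarith
    have hexp : Real.exp (-2 * x ^ 2) ≤ Real.exp (-x) := by
      apply Real.exp_le_exp.mpr; nlinarith
    simp only [Polynomial.eval_monomial, norm_mul, Real.norm_eq_abs]
    rw [abs_of_nonneg (Real.exp_pos _).le, abs_pow, abs_of_nonneg hx0]
    calc |c| * x ^ k * Real.exp (-2 * x ^ 2) ≤ |c| * x ^ k * Real.exp (-x) := by
          apply mul_le_mul_of_nonneg_left hexp (by positivity)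
      _ = |c| * (x ^ k * Real.exp (-x)) := by ring

lemma tendsto_poly_gauss_bot (p : Polynomial ℝ) :
    Tendsto (fun x : ℝ => p.eval x * Real.exp (-2 * x ^ 2)) atBot (𝓝 0) := by
  have h := tendsto_poly_gauss_top (p.comp (-Polynomial.X))
  have hneg : Tendsto (fun x : ℝ => -x) atBot atTop := tendsto_neg_atBot_atTop
  have := h.comp hneg
  simp only [Function.comp_def, Polynomial.eval_comp, Polynomial.eval_neg, Polynomial.eval_X,
    neg_neg, neg_sq] at this
  exact this

lemma integral_deriv_zero (f f' : ℝ → ℝ) (hd : ∀ x, HasDerivAt f (f' x) x)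
    (hi : Integrable f') (ht : Tendsto f atTop (𝓝 0)) (hb : Tendsto f atBot (𝓝 0)) :
    ∫ x, f' x = 0 := by
  have h1 : ∫ x in Set.Ioi (0:ℝ), f' x = 0 - f 0 :=
    integral_Ioi_of_hasDerivAt_of_tendsto' (fun x _ => hd x) hi.integrableOn ht
  have h2 : ∫ x in Set.Iic (0:ℝ), f' x = f 0 - 0 :=
    integral_Iic_of_hasDerivAt_of_tendsto' (fun x _ => hd x) hi.integrableOn hb
  have h3 := intervalIntegral.integral_Iic_add_Ioi (b := (0:ℝ)) hi.integrableOn hi.integrableOn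
  linarith

noncomputable def J (n m l : ℕ) : ℝ :=
  ∫ x : ℝ, hermiteP n x * hermiteP m x * hermiteP l x * Real.exp (-2 * x ^ 2)

lemma H3_as_poly (a b c : ℕ) : ∃ p : Polynomial ℝ, ∀ x : ℝ,
    hermiteP a x * hermiteP b x * hermiteP c x = p.eval x := by
  obtain ⟨pa, hpa⟩ := herm_poly a
  obtain ⟨pb, hpb⟩ := herm_poly b
  obtain ⟨pc, hpc⟩ := herm_poly c
  exact ⟨pa * pb * pc, fun x => by simp [hpa, hpb, hpc]⟩

lemma integrable_H3 (a b c : ℕ) :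
    Integrable fun x : ℝ => hermiteP a x * hermiteP b x * hermiteP c x * Real.exp (-2 * x ^ 2) := by
  obtain ⟨p, hp⟩ := H3_as_poly a b c
  have := integrable_poly_gauss p
  apply this.congr
  filter_upwards with x
  rw [hp]

lemma tendsto_H3_top (a b c : ℕ) :
    Tendsto (fun x : ℝ => hermiteP a x * hermiteP b x * hermiteP c x * Real.exp (-2 * x ^ 2))
      atTop (𝓝 0) := by
  obtain ⟨p, hp⟩ := H3_as_poly a b c
  have := tendsto_poly_gauss_top p
  apply this.congr
  intro x; rw [hp]

lemma tendsto_H3_bot (a b c : ℕ) :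
    Tendsto (fun x : ℝ => hermiteP a x * hermiteP b x * hermiteP c x * Real.exp (-2 * x ^ 2))
      atBot (𝓝 0) := by
  obtain ⟨p, hp⟩ := H3_as_poly a b c
  have := tendsto_poly_gauss_bot p
  apply this.congr
  intro x; rw [hp]

lemma J_rec (n m l : ℕ) :
    J (n + 1) m l = m * J n (m - 1) l + l * J n m (l - 1) - n * J (n - 1) m l := by
  set f : ℝ → ℝ := fun x =>
    hermiteP n x * hermiteP m x * hermiteP l x * Real.exp (-2 * x ^ 2) with hf
  set g : ℝ → ℝ := fun x =>
    (2 * (m:ℝ) * (hermiteP n x * hermiteP (m - 1) x * hermiteP l x * Real.exp (-2 * x ^ 2))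
      + 2 * (l:ℝ) * (hermiteP n x * hermiteP m x * hermiteP (l - 1) x * Real.exp (-2 * x ^ 2)))
    - (2 * (hermiteP (n + 1) x * hermiteP m x * hermiteP l x * Real.exp (-2 * x ^ 2))
      + 2 * (n:ℝ) * (hermiteP (n - 1) x * hermiteP m x * hermiteP l x * Real.exp (-2 * x ^ 2)))
    with hg
  have hi_a := integrable_H3 (n - 1) m l
  have hi_b := integrable_H3 n (m - 1) l
  have hi_c := integrable_H3 n m (l - 1)
  have hi_d := integrable_H3 (n + 1) m l
  have hgi : Integrable g := by
    rw [hg]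
    exact ((hi_b.const_mul _).add (hi_c.const_mul _)).sub
      ((hi_d.const_mul 2).add (hi_a.const_mul _))
  have hderiv : ∀ x, HasDerivAt f (g x) x := by
    intro x
    have hexp : HasDerivAt (fun y : ℝ => Real.exp (-2 * y ^ 2))
        (Real.exp (-2 * x ^ 2) * (-4 * x)) x := by
      have h1 : HasDerivAt (fun y : ℝ => -2 * y ^ 2) (-4 * x) x := by
        have := (hasDerivAt_pow 2 x).const_mul (-2 : ℝ)
        exact this.congr_deriv (by push_cast; ring)
      exact h1.exp
    have hdn := hermiteP_hasDerivAt n x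
    have hdm := hermiteP_hasDerivAt m x
    have hdl := hermiteP_hasDerivAt l x
    have H := ((hdn.mul hdm).mul hdl).mul hexp
    have : g x =
        (((2 * (n:ℝ) * hermiteP (n - 1) x) * hermiteP m x
            + hermiteP n x * (2 * (m:ℝ) * hermiteP (m - 1) x)) * hermiteP l x
          + hermiteP n x * hermiteP m x * (2 * (l:ℝ) * hermiteP (l - 1) x))
            * Real.exp (-2 * x ^ 2)
        + hermiteP n x * hermiteP m x * hermiteP l x * (Real.exp (-2 * x ^ 2) * (-4 * x)) := by
      rw [hg]
      have hx := xherm n x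
      linear_combination (2 * hermiteP m x * hermiteP l x * Real.exp (-2 * x ^ 2)) * hx
    rw [hf]
    exact this ▸ H
  have h0 : ∫ x, g x = 0 :=
    integral_deriv_zero f g hderiv hgi (tendsto_H3_top n m l) (tendsto_H3_bot n m l)
  have hsplit : ∫ x, g x =
      (2 * (m:ℝ) * J n (m - 1) l + 2 * (l:ℝ) * J n m (l - 1))
        - (2 * J (n + 1) m l + 2 * (n:ℝ) * J (n - 1) m l) := by
    rw [hg]
    beta_reduce
    have h1 : Integrable (fun x : ℝ =>
        2 * (m:ℝ) * (hermiteP n x * hermiteP (m - 1) x * hermiteP l x * Real.exp (-2 * x ^ 2))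
          + 2 * (l:ℝ) * (hermiteP n x * hermiteP m x * hermiteP (l - 1) x
              * Real.exp (-2 * x ^ 2))) := by
      exact (hi_b.const_mul _).add (hi_c.const_mul _)
    have h2 : Integrable (fun x : ℝ =>
        2 * (hermiteP (n + 1) x * hermiteP m x * hermiteP l x * Real.exp (-2 * x ^ 2))
          + 2 * (n:ℝ) * (hermiteP (n - 1) x * hermiteP m x * hermiteP l x
              * Real.exp (-2 * x ^ 2))) := by
      exact (hi_d.const_mul 2).add (hi_a.const_mul _)
    rw [integral_sub h1 h2]
    rw [integral_add (hi_b.const_mul _) (hi_c.const_mul _)]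
    rw [integral_add (hi_d.const_mul 2) (hi_a.const_mul _)]
    rw [integral_const_mul, integral_const_mul, integral_const_mul, integral_const_mul]
    rfl
  rw [hsplit] at h0
  linarith

lemma J_base : J 0 0 0 = Real.sqrt (π / 2) := by
  unfold J
  simp only [hermiteP, one_mul]
  simpa using integral_gaussian 2

lemma J_swap12 (n m l : ℕ) : J n m l = J m n l := by
  unfold J; congr 1; funext x; ring

lemma J_swap13 (n m l : ℕ) : J n m l = J l m n := by
  unfold J; congr 1; funext x; ring

noncomputable def Gz (n m l : ℤ) : ℝ :=
  if Even (n + m + l) then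
    ddfact (n + m - l - 1) * ddfact (n - m + l - 1) * ddfact (-n + m + l - 1)
  else 0

lemma Gz_rec (n m l : ℤ) :
    Gz (n + 1) m l = (m : ℝ) * Gz n (m - 1) l + (l : ℝ) * Gz n m (l - 1)
      - (n : ℝ) * Gz (n - 1) m l := by
  by_cases hpar : Even (n + 1 + m + l)
  · have hodd : ¬ Even (n + m + l) := by
      simp only [Int.even_iff] at *; omega
    have p1 : Even (n + (m - 1) + l) := by simp only [Int.even_iff] at *; omega
    have p2 : Even (n + m + (l - 1)) := by simp only [Int.even_iff] at *; omega
    have p3 : Even (n - 1 + m + l) := by simp only [Int.even_iff] at *; omega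
    have oa : Odd (n + m - l - 2) := by simp only [Int.even_iff, Int.odd_iff] at *; omega
    have ob : Odd (n - m + l - 2) := by simp only [Int.even_iff, Int.odd_iff] at *; omega
    have oc : Odd (-n + m + l - 2) := by simp only [Int.even_iff, Int.odd_iff] at *; omega
    unfold Gz
    rw [if_pos hpar, if_pos p1, if_pos p2, if_pos p3]
    rw [show n + 1 + m - l - 1 = (n + m - l - 2) + 2 by ring,
        show n + 1 - m + l - 1 = (n - m + l - 2) + 2 by ring,
        show -(n + 1) + m + l - 1 = -n + m + l - 2 by ring,
        show n + (m - 1) - l - 1 = n + m - l - 2 by ring,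
        show n - (m - 1) + l - 1 = (n - m + l - 2) + 2 by ring,
        show -n + (m - 1) + l - 1 = -n + m + l - 2 by ring,
        show n + m - (l - 1) - 1 = (n + m - l - 2) + 2 by ring,
        show n - m + (l - 1) - 1 = n - m + l - 2 by ring,
        show -n + m + (l - 1) - 1 = -n + m + l - 2 by ring,
        show n - 1 + m - l - 1 = n + m - l - 2 by ring,
        show n - 1 - m + l - 1 = n - m + l - 2 by ring,
        show -(n - 1) + m + l - 1 = (-n + m + l - 2) + 2 by ring]
    rw [d_step _ oa, d_step _ ob, d_step _ oc]
    push_cast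
    ring
  · have p1 : ¬ Even (n + (m - 1) + l) := by simp only [Int.even_iff] at *; omega
    have p2 : ¬ Even (n + m + (l - 1)) := by simp only [Int.even_iff] at *; omega
    have p3 : ¬ Even (n - 1 + m + l) := by simp only [Int.even_iff] at *; omega
    unfold Gz
    rw [if_neg hpar, if_neg p1, if_neg p2, if_neg p3]
    simp

lemma Gz_swap12 (a b c : ℤ) : Gz a b c = Gz b a c := by
  unfold Gz
  by_cases h : Even (a + b + c)
  · rw [if_pos h, if_pos (by rwa [show b + a + c = a + b + c by ring])]
    rw [show b + a - c - 1 = a + b - c - 1 by ring,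
        show b - a + c - 1 = -a + b + c - 1 by ring,
        show -b + a + c - 1 = a - b + c - 1 by ring]
    ring
  · rw [if_neg h, if_neg (by rwa [show b + a + c = a + b + c by ring])]

lemma Gz_swap13 (a b c : ℤ) : Gz a b c = Gz c b a := by
  unfold Gz
  by_cases h : Even (a + b + c)
  · rw [if_pos h, if_pos (by rwa [show c + b + a = a + b + c by ring])]
    rw [show c + b - a - 1 = -a + b + c - 1 by ring,
        show c - b + a - 1 = a - b + c - 1 by ring,
        show -c + b + a - 1 = a + b - c - 1 by ring]
    ring
  · rw [if_neg h, if_neg (by rwa [show c + b + a = a + b + c by ring])]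

lemma coeff_cast (m : ℕ) (f : ℤ → ℝ) :
    (m : ℝ) * f ((m - 1 : ℕ) : ℤ) = (m : ℝ) * f ((m : ℤ) - 1) := by
  cases m with
  | zero => simp
  | succ k =>
    congr 2
    push_cast
    simp

lemma Gz_base : Gz 0 0 0 = 1 := by
  unfold Gz
  norm_num [ddfact_neg_one]

lemma J_eq : ∀ s n m l : ℕ, n + m + l = s → J n m l = Real.sqrt (π / 2) * Gz n m l := by
  intro s
  induction s using Nat.strong_induction_on with
  | _ s ih =>
    intro n m l hs
    have step : ∀ n' m' l' : ℕ, n' + 1 + m' + l' = s →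
        J (n' + 1) m' l' = Real.sqrt (π / 2) * Gz (n' + 1 : ℕ) m' l' := by
      intro n' m' l' hs'
      rw [J_rec]
      rw [ih (n' + (m' - 1) + l') (by omega) n' (m' - 1) l' rfl,
          ih (n' + m' + (l' - 1)) (by omega) n' m' (l' - 1) rfl,
          ih (n' - 1 + m' + l') (by omega) (n' - 1) m' l' rfl]
      have e1 : (m' : ℝ) * (Real.sqrt (π / 2) * Gz (n' : ℕ) ((m' - 1 : ℕ) : ℤ) (l' : ℕ))
          = (m' : ℝ) * (Real.sqrt (π / 2) * Gz (n' : ℕ) ((m' : ℤ) - 1) (l' : ℕ)) :=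
        coeff_cast m' (fun t => Real.sqrt (π / 2) * Gz (n' : ℕ) t (l' : ℕ))
      have e2 : (l' : ℝ) * (Real.sqrt (π / 2) * Gz (n' : ℕ) (m' : ℕ) ((l' - 1 : ℕ) : ℤ))
          = (l' : ℝ) * (Real.sqrt (π / 2) * Gz (n' : ℕ) (m' : ℕ) ((l' : ℤ) - 1)) :=
        coeff_cast l' (fun t => Real.sqrt (π / 2) * Gz (n' : ℕ) (m' : ℕ) t)
      have e3 : (n' : ℝ) * (Real.sqrt (π / 2) * Gz ((n' - 1 : ℕ) : ℤ) (m' : ℕ) (l' : ℕ))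
          = (n' : ℝ) * (Real.sqrt (π / 2) * Gz ((n' : ℤ) - 1) (m' : ℕ) (l' : ℕ)) :=
        coeff_cast n' (fun t => Real.sqrt (π / 2) * Gz t (m' : ℕ) (l' : ℕ))
      rw [e1, e2, e3]
      have := Gz_rec (n' : ℕ) (m' : ℕ) (l' : ℕ)
      rw [show ((n' + 1 : ℕ) : ℤ) = (n' : ℤ) + 1 by push_cast; ring, this]
      push_cast
      ring
    rcases n with _ | n
    · rcases m with _ | m
      · rcases l with _ | l
        · rw [J_base]; simp [Gz_base]
        · rw [J_swap13, step l 0 0 (by omega), Gz_swap13]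
      · rw [J_swap12, step m 0 l (by omega), Gz_swap12]
    · exact step n m l (by omega)

/-- `I n m l k = √(2/π) ∫ H_n(x) H_m(x) H_l(x) H_k(x) e^{-2x²} dx`. -/
noncomputable def I (n m l k : ℕ) : ℝ :=
  Real.sqrt (2 / π) *
    ∫ x : ℝ,
      hermiteP n x * hermiteP m x * hermiteP l x * hermiteP k x * Real.exp (-2 * x ^ 2)

lemma coeff2_cast (l : ℕ) (f : ℤ → ℝ) :
    4 * (l : ℝ) * ((l : ℝ) - 1) * f ((l - 2 : ℕ) : ℤ)
      = 4 * (l : ℝ) * ((l : ℝ) - 1) * f ((l : ℤ) - 2) := by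
  rcases l with _ | _ | k
  · simp
  · norm_num
  · congr 2
    push_cast
    ring

lemma I_split (n m l : ℕ) : I n m l 2 =
    Real.sqrt (2 / π) * (J n m (l + 2) + 4 * (l : ℝ) * J n m l
      + 4 * (l : ℝ) * ((l : ℝ) - 1) * J n m (l - 2)) := by
  unfold I J
  congr 1
  have h1 : Integrable (fun x : ℝ =>
      hermiteP n x * hermiteP m x * hermiteP (l + 2) x * Real.exp (-2 * x ^ 2)
        + 4 * (l : ℝ) * (hermiteP n x * hermiteP m x * hermiteP l x * Real.exp (-2 * x ^ 2))) := by
    exact (integrable_H3 n m (l + 2)).add ((integrable_H3 n m l).const_mul _)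
  have h2 := (integrable_H3 n m (l - 2)).const_mul (4 * (l : ℝ) * ((l : ℝ) - 1))
  calc ∫ x : ℝ, hermiteP n x * hermiteP m x * hermiteP l x * hermiteP 2 x * Real.exp (-2 * x ^ 2)
      = ∫ x : ℝ,
          (hermiteP n x * hermiteP m x * hermiteP (l + 2) x * Real.exp (-2 * x ^ 2)
            + 4 * (l : ℝ) * (hermiteP n x * hermiteP m x * hermiteP l x * Real.exp (-2 * x ^ 2)))
          + 4 * (l : ℝ) * ((l : ℝ) - 1)
            * (hermiteP n x * hermiteP m x * hermiteP (l - 2) x * Real.exp (-2 * x ^ 2)) := by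
        congr 1
        funext x
        linear_combination (hermiteP n x * hermiteP m x * Real.exp (-2 * x ^ 2)) * h2_mul l x
    _ = _ := by
        rw [integral_add h1 h2, integral_add (integrable_H3 n m (l + 2))
          ((integrable_H3 n m l).const_mul _), integral_const_mul, integral_const_mul]

lemma final_alg (n m l : ℕ) (h : Even (n + m + l)) :
    Gz (n : ℕ) (m : ℕ) ((l : ℤ) + 2) + 4 * (l : ℝ) * Gz (n : ℕ) (m : ℕ) (l : ℕ)
      + 4 * (l : ℝ) * ((l : ℝ) - 1) * Gz (n : ℕ) (m : ℕ) ((l : ℤ) - 2)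
    = ddfact ((n : ℤ) + m - l - 3) * ddfact ((n : ℤ) - m + l - 3) *
        ddfact (-(n : ℤ) + m + l - 3) *
        ((((n : ℝ) ^ 2 + (m : ℝ) ^ 2 + (l : ℝ) ^ 2
            - 2 * n * m - 2 * n * l - 2 * m * l) - 1) ^ 2 - 16 * n * m * l) := by
  rw [Nat.even_iff] at h
  have hE1 : Even ((n : ℤ) + m + ((l : ℤ) + 2)) := by rw [Int.even_iff]; omega
  have hE2 : Even ((n : ℤ) + m + l) := by rw [Int.even_iff]; omega
  have hE3 : Even ((n : ℤ) + m + ((l : ℤ) - 2)) := by rw [Int.even_iff]; omega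
  have oα : Odd ((n : ℤ) + m - l - 3) := by rw [Int.odd_iff]; omega
  have oα2 : Odd ((n : ℤ) + m - l - 3 + 2) := by rw [Int.odd_iff]; omega
  have oβ : Odd ((n : ℤ) - m + l - 3) := by rw [Int.odd_iff]; omega
  have oβ2 : Odd ((n : ℤ) - m + l - 3 + 2) := by rw [Int.odd_iff]; omega
  have oγ : Odd (-(n : ℤ) + m + l - 3) := by rw [Int.odd_iff]; omega
  have oγ2 : Odd (-(n : ℤ) + m + l - 3 + 2) := by rw [Int.odd_iff]; omega
  unfold Gz
  rw [if_pos hE1, if_pos hE2, if_pos hE3]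
  rw [show (n : ℤ) + m - ((l : ℤ) + 2) - 1 = (n : ℤ) + m - l - 3 by ring,
      show (n : ℤ) - m + ((l : ℤ) + 2) - 1 = ((n : ℤ) - m + l - 3 + 2) + 2 by ring,
      show -(n : ℤ) + m + ((l : ℤ) + 2) - 1 = (-(n : ℤ) + m + l - 3 + 2) + 2 by ring,
      show (n : ℤ) + m - (l : ℤ) - 1 = ((n : ℤ) + m - l - 3) + 2 by ring,
      show (n : ℤ) - m + (l : ℤ) - 1 = ((n : ℤ) - m + l - 3) + 2 by ring,
      show -(n : ℤ) + m + (l : ℤ) - 1 = (-(n : ℤ) + m + l - 3) + 2 by ring,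
      show (n : ℤ) + m - ((l : ℤ) - 2) - 1 = ((n : ℤ) + m - l - 3 + 2) + 2 by ring,
      show (n : ℤ) - m + ((l : ℤ) - 2) - 1 = (n : ℤ) - m + l - 3 by ring,
      show -(n : ℤ) + m + ((l : ℤ) - 2) - 1 = -(n : ℤ) + m + l - 3 by ring]
  rw [d_step _ oα2, d_step _ oβ2, d_step _ oγ2, d_step _ oα, d_step _ oβ, d_step _ oγ]
  push_cast
  ring

theorem I4_two_eq (n m l : ℕ) (h : Even (n + m + l))
    (P₁ : ℝ)
    (hP₁ : P₁ = (n : ℝ) ^ 2 + (m : ℝ) ^ 2 + (l : ℝ) ^ 2 - 2 * n * m - 2 * n * l - 2 * m * l) :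
    I n m l 2 =
      ddfact ((n : ℤ) + m - l - 3) * ddfact ((n : ℤ) - m + l - 3) *
        ddfact (-(n : ℤ) + m + l - 3) *
        ((P₁ - 1) ^ 2 - 16 * n * m * l) := by
  subst hP₁
  rw [I_split]
  rw [J_eq (n + m + (l + 2)) n m (l + 2) rfl, J_eq (n + m + l) n m l rfl,
      J_eq (n + m + (l - 2)) n m (l - 2) rfl]
  have hπ : (0 : ℝ) < π := Real.pi_pos
  have hsq : Real.sqrt (2 / π) * Real.sqrt (π / 2) = 1 := by
    rw [← Real.sqrt_mul (by positivity)]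
    rw [show (2 / π) * (π / 2) = 1 by field_simp]
    exact Real.sqrt_one
  have hL : Real.sqrt (2 / π) * (Real.sqrt (π / 2) * Gz (n : ℕ) (m : ℕ) ((l + 2 : ℕ) : ℤ)
        + 4 * (l : ℝ) * (Real.sqrt (π / 2) * Gz (n : ℕ) (m : ℕ) (l : ℕ))
        + 4 * (l : ℝ) * ((l : ℝ) - 1)
          * (Real.sqrt (π / 2) * Gz (n : ℕ) (m : ℕ) ((l - 2 : ℕ) : ℤ)))
      = Gz (n : ℕ) (m : ℕ) ((l + 2 : ℕ) : ℤ) + 4 * (l : ℝ) * Gz (n : ℕ) (m : ℕ) (l : ℕ)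
        + 4 * (l : ℝ) * ((l : ℝ) - 1) * Gz (n : ℕ) (m : ℕ) ((l - 2 : ℕ) : ℤ) := by
    linear_combination (Gz (n : ℕ) (m : ℕ) ((l + 2 : ℕ) : ℤ)
      + 4 * (l : ℝ) * Gz (n : ℕ) (m : ℕ) (l : ℕ)
      + 4 * (l : ℝ) * ((l : ℝ) - 1) * Gz (n : ℕ) (m : ℕ) ((l - 2 : ℕ) : ℤ)) * hsq
  rw [hL]
  rw [coeff2_cast l (fun t => Gz (n : ℕ) (m : ℕ) t)]
  rw [show ((l + 2 : ℕ) : ℤ) = (l : ℤ) + 2 by push_cast; ring]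
  exact final_alg n m l h
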